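/- arXiv:2111.02501 — 4 statements merged into one kernel-verified Lean document; each statement's English description precedes it below -/
import Mathlib

section
/- Let R be a commutative Krasner hyperring with nonzero identity, let φ : L(R) → L(R) ∪ {∅} be a function, and let T be a proper hyperideal of R that is φ-prime. If T is not a prime hyperideal, then T² ⊆ φ(T); equivalently, if T² ⊄ φ(T), then T is a prime hyperideal. -/
universe u

/-- A commutative Krasner hyperring with nonzero identity. -/
class KrasnerHyperring (R : Type u) where
  hadd : R → R → Set R
  mul : R → R → R
  zero : R
  one : R
  neg : R → R
  hadd_nonempty : ∀ a b : R, (hadd a b).Nonempty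
  hadd_comm : ∀ a b : R, hadd a b = hadd b a
  hadd_assoc : ∀ a b c : R, (⋃ x ∈ hadd a b, hadd x c) = ⋃ y ∈ hadd b c, hadd a y
  hadd_zero : ∀ a : R, hadd a zero = {a}
  zero_mem_hadd_neg : ∀ a : R, zero ∈ hadd a (neg a)
  neg_unique : ∀ a b : R, zero ∈ hadd a b → b = neg a
  reversible : ∀ a b c : R, c ∈ hadd a b → b ∈ hadd (neg a) c
  mul_assoc : ∀ a b c : R, mul (mul a b) c = mul a (mul b c)
  mul_comm : ∀ a b : R, mul a b = mul b a
  mul_one : ∀ a : R, mul a one = a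
  mul_zero : ∀ a : R, mul a zero = zero
  one_ne_zero : one ≠ zero
  distrib : ∀ a b c : R, (fun x => mul a x) '' hadd b c = hadd (mul a b) (mul a c)

namespace KrasnerHyperring

variable {R : Type u} [KrasnerHyperring R]

/-- A hyperideal of a Krasner hyperring. -/
structure Hyperideal (R : Type u) [KrasnerHyperring R] where
  carrier : Set R
  nonempty' : carrier.Nonempty
  hadd_subset' : ∀ a ∈ carrier, ∀ b ∈ carrier, hadd a b ⊆ carrier
  neg_mem' : ∀ a ∈ carrier, neg a ∈ carrier
  mul_mem' : ∀ r : R, ∀ a ∈ carrier, mul r a ∈ carrier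

instance : SetLike (Hyperideal R) R where
  coe := Hyperideal.carrier
  coe_injective := by rintro ⟨⟩ ⟨⟩ h; congr

/-- A hyperideal is proper if it is not the whole hyperring. -/
def Hyperideal.IsProper (N : Hyperideal R) : Prop := (N : Set R) ≠ Set.univ

/-- `A ⊕ B` for subsets. -/
def haddSet (A B : Set R) : Set R := ⋃ a ∈ A, ⋃ b ∈ B, hadd a b

/-- `A ∘ B` : set of all products. -/
def mulSet (A B : Set R) : Set R := {x : R | ∃ a ∈ A, ∃ b ∈ B, x = mul a b}

/-- The hyperideal generated by a set (as a set). -/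
def genIdeal (S : Set R) : Set R := ⋂₀ {C : Set R | (∃ I : Hyperideal R, C = ↑I) ∧ S ⊆ C}

/-- Products of `n` elements of `S`. -/
def setPow (S : Set R) : ℕ → Set R
  | 0 => Set.univ
  | 1 => S
  | (n+2) => mulSet S (setPow S (n+1))

/-- `N^n` : the hyperideal generated by products of `n` elements of `N`. -/
def idealPow (N : Hyperideal R) (n : ℕ) : Set R := genIdeal (setPow (↑N) n)

/-- Powers of an element. -/
def hpow (a : R) : ℕ → R
  | 0 => one
  | (n+1) => mul a (hpow a n)

/-- The radical of a set. -/
def radical (A : Set R) : Set R := {a : R | ∃ n : ℕ, 0 < n ∧ hpow a n ∈ A}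

/-- `(A : a)`. -/
def colon (A : Set R) (a : R) : Set R := {r : R | mul a r ∈ A}

/-- `(A : M)` for a set `M`. -/
def colonSet (A B : Set R) : Set R := {r : R | ∀ b ∈ B, mul r b ∈ A}

/-- Prime hyperideal. -/
def IsPrime (N : Hyperideal R) : Prop :=
  N.IsProper ∧ ∀ a b : R, mul a b ∈ N → a ∈ N ∨ b ∈ N

/-- Weakly prime hyperideal. -/
def IsWeaklyPrime (N : Hyperideal R) : Prop :=
  N.IsProper ∧ ∀ a b : R, mul a b ∈ N → mul a b ≠ zero → a ∈ N ∨ b ∈ N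

/-- `φ`-prime hyperideal. -/
def IsPhiPrime (φ : Hyperideal R → Set R) (N : Hyperideal R) : Prop :=
  N.IsProper ∧ ∀ a b : R, mul a b ∈ N → mul a b ∉ φ N → a ∈ N ∨ b ∈ N

/-- Primary hyperideal. -/
def IsPrimary (N : Hyperideal R) : Prop :=
  N.IsProper ∧ ∀ a b : R, mul a b ∈ N → a ∈ N ∨ ∃ k : ℕ, 0 < k ∧ hpow b k ∈ N

/-- `φ`-primary hyperideal. -/
def IsPhiPrimary (φ : Hyperideal R → Set R) (N : Hyperideal R) : Prop :=
  N.IsProper ∧ ∀ a b : R, mul a b ∈ N → mul a b ∉ φ N →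
    a ∈ N ∨ ∃ k : ℕ, 0 < k ∧ hpow b k ∈ N

/-- `δ`-primary hyperideal. -/
def IsDeltaPrimary (δ : Hyperideal R → Hyperideal R) (N : Hyperideal R) : Prop :=
  N.IsProper ∧ ∀ a b : R, mul a b ∈ N → a ∈ N ∨ b ∈ δ N

/-- `φ`-`δ`-primary hyperideal. -/
def IsPhiDeltaPrimary (φ : Hyperideal R → Set R) (δ : Hyperideal R → Hyperideal R)
    (N : Hyperideal R) : Prop :=
  N.IsProper ∧ ∀ a b : R, mul a b ∈ N → mul a b ∉ φ N → a ∈ N ∨ b ∈ δ N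

/-- `φ : L(R) → L(R) ∪ {∅}` : every value is a hyperideal or the empty set. -/
def MapsToIdealOrEmpty (φ : Hyperideal R → Set R) : Prop :=
  ∀ I : Hyperideal R, φ I = ∅ ∨ ∃ J : Hyperideal R, φ I = ↑J

/-- A reduction function. -/
def IsReduction (φ : Hyperideal R → Set R) : Prop :=
  MapsToIdealOrEmpty φ ∧ (∀ I : Hyperideal R, φ I ⊆ ↑I) ∧
    ∀ I J : Hyperideal R, (I : Set R) ⊆ ↑J → φ I ⊆ φ J

/-- An expansion function. -/
def IsExpansion (δ : Hyperideal R → Hyperideal R) : Prop :=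
  (∀ I : Hyperideal R, (I : Set R) ⊆ ↑(δ I)) ∧
    ∀ I J : Hyperideal R, (I : Set R) ⊆ ↑J → (δ I : Set R) ⊆ ↑(δ J)

/-- `φ_w(N) = ⋂_{n ≥ 1} N^n`. -/
def phiW (N : Hyperideal R) : Set R := ⋂ (n : ℕ) (_ : 1 ≤ n), idealPow N n

lemma zero_mem (N : Hyperideal R) : zero ∈ N := by
  obtain ⟨a, ha⟩ := N.nonempty'
  exact N.hadd_subset' a ha (neg a) (N.neg_mem' a ha) (zero_mem_hadd_neg a)

lemma proper_of_subset_proper {M T : Hyperideal R} (h : (M : Set R) ⊆ ↑T)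
    (hT : T.IsProper) : M.IsProper :=
  fun hu => hT (Set.univ_subset_iff.mp (hu ▸ h))

lemma mul_neg_eq_neg_mul (a b : R) : mul a (neg b) = neg (mul a b) := by
  apply neg_unique
  have h0 : zero ∈ hadd b (neg b) := zero_mem_hadd_neg b
  have : mul a zero ∈ (fun x => mul a x) '' hadd b (neg b) := ⟨zero, h0, rfl⟩
  rw [distrib, mul_zero] at this
  exact this

lemma mem_of_hadd_mem {N : Hyperideal R} {x y c : R} (hx : x ∈ N)
    (hc : c ∈ N) (h : c ∈ hadd x y) : y ∈ N := by
  have := reversible x y c h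
  exact N.hadd_subset' (neg x) (N.neg_mem' x hx) c hc this

/-- If the proper hyperideal `T` is `φ`-prime but not prime,
then `T² ⊆ φ(T)`. -/
theorem phiPrime_not_prime_sq_subset {R : Type u} [KrasnerHyperring R]
    (φ : Hyperideal R → Set R) (hφ : MapsToIdealOrEmpty φ)
    (T : Hyperideal R) (hT : IsPhiPrime φ T) (hnp : ¬ IsPrime T) :
    idealPow T 2 ⊆ φ T := by
  obtain ⟨hTp, hTφ⟩ := hT
  -- get a, b witnessing non-primeness
  have hnp' : ¬ ∀ a b : R, mul a b ∈ T → a ∈ T ∨ b ∈ T := fun h => hnp ⟨hTp, h⟩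
  push_neg at hnp'
  obtain ⟨a, b, hab, ha, hb⟩ := hnp'
  have habφ : mul a b ∈ φ T := by
    by_contra h
    rcases hTφ a b hab h with h' | h' <;> [exact ha h'; exact hb h']
  -- φ T is a hyperideal J
  obtain ⟨J, hJ⟩ : ∃ J : Hyperideal R, φ T = ↑J := by
    rcases hφ T with h | h
    · rw [h] at habφ; exact absurd habφ (Set.notMem_empty _)
    · exact h
  rw [hJ] at habφ ⊢
  have habJ : mul a b ∈ J := habφ
  -- Step A: for all q ∈ T and c ∈ b ⊕ q, a*c ∈ J
  have stepA : ∀ q : R, q ∈ T → ∀ c ∈ hadd b q, mul a c ∈ J := by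
    intro q hq c hc
    have hacT : mul a c ∈ T := by
      have : mul a c ∈ (fun x => mul a x) '' hadd b q := ⟨c, hc, rfl⟩
      rw [distrib] at this
      exact T.hadd_subset' _ hab _ (T.mul_mem' a q hq) this
    by_contra hcJ
    have hcφ : mul a c ∉ φ T := by rw [hJ]; exact hcJ
    rcases hTφ a c hacT hcφ with h | h
    · exact ha h
    · exact hb (mem_of_hadd_mem hq h (by rwa [hadd_comm] at hc))
  -- Step A': for all p ∈ T and c ∈ a ⊕ p, c*b ∈ J
  have stepA' : ∀ p : R, p ∈ T → ∀ c ∈ hadd a p, mul c b ∈ J := by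
    intro p hp c hc
    have hcbT : mul c b ∈ T := by
      have : mul b c ∈ (fun x => mul b x) '' hadd a p := ⟨c, hc, rfl⟩
      rw [distrib] at this
      rw [mul_comm]
      exact T.hadd_subset' _ (by rwa [mul_comm]) _ (T.mul_mem' b p hp)
        this
    by_contra hcJ
    have hcφ : mul c b ∉ φ T := by rw [hJ]; exact hcJ
    rcases hTφ c b hcbT hcφ with h | h
    · exact ha (mem_of_hadd_mem hp h (by rwa [hadd_comm] at hc))
    · exact hb h
  -- Step B: for u ∈ a ⊕ p, v ∈ b ⊕ q (p,q ∈ T), u*v ∈ J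
  have stepB : ∀ p q : R, p ∈ T → q ∈ T → ∀ u ∈ hadd a p, ∀ v ∈ hadd b q,
      mul u v ∈ J := by
    intro p q hp hq u hu v hv
    have huvT : mul u v ∈ T := by
      have h1 : mul u v ∈ (fun x => mul u x) '' hadd b q := ⟨v, hv, rfl⟩
      rw [distrib] at h1
      have hub : mul u b ∈ T := by
        have : mul b u ∈ (fun x => mul b x) '' hadd a p := ⟨u, hu, rfl⟩
        rw [distrib] at this
        have := T.hadd_subset' _ (by rwa [mul_comm] : mul b a ∈ T)
          _ (T.mul_mem' b p hp) this
        rwa [mul_comm] at this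
      exact T.hadd_subset' _ hub _ (T.mul_mem' u q hq) h1
    by_contra hJv
    have hvφ : mul u v ∉ φ T := by rw [hJ]; exact hJv
    rcases hTφ u v huvT hvφ with h | h
    · exact ha (mem_of_hadd_mem hp h (by rwa [hadd_comm] at hu))
    · exact hb (mem_of_hadd_mem hq h (by rwa [hadd_comm] at hv))
  -- Main claim: for all p, q ∈ T, p*q ∈ J
  have main : ∀ p q : R, p ∈ T → q ∈ T → mul p q ∈ J := by
    intro p q hp hq
    obtain ⟨u, hu⟩ := hadd_nonempty a p
    obtain ⟨v, hv⟩ := hadd_nonempty b q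
    have huvJ : mul u v ∈ J := stepB p q hp hq u hu v hv
    have havJ : mul a v ∈ J := stepA q hq v hv
    have hubJ : mul u b ∈ J := stepA' p hp u hu
    -- p ∈ (-a) ⊕ u, so p*v ∈ (-(a*v)) ⊕ (u*v) ⊆ J
    have hpmem : p ∈ hadd (neg a) u := reversible a p u hu
    have hpvJ : mul p v ∈ J := by
      have : mul v p ∈ (fun x => mul v x) '' hadd (neg a) u := ⟨p, hpmem, rfl⟩
      rw [distrib, mul_neg_eq_neg_mul] at this
      have := J.hadd_subset' _ (J.neg_mem' _ (by rwa [mul_comm] at havJ))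
        _ (by rwa [mul_comm] at huvJ) this
      rwa [mul_comm] at this
    have hpbJ : mul p b ∈ J := by
      have : mul b p ∈ (fun x => mul b x) '' hadd (neg a) u := ⟨p, hpmem, rfl⟩
      rw [distrib, mul_neg_eq_neg_mul] at this
      have := J.hadd_subset' _ (J.neg_mem' _ (by rwa [mul_comm] at habJ))
        _ (by rwa [mul_comm] at hubJ) this
      rwa [mul_comm] at this
    -- q ∈ (-b) ⊕ v, so p*q ∈ (-(p*b)) ⊕ (p*v) ⊆ J
    have hqmem : q ∈ hadd (neg b) v := reversible b q v hv
    have : mul p q ∈ (fun x => mul p x) '' hadd (neg b) v := ⟨q, hqmem, rfl⟩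
    rw [distrib, mul_neg_eq_neg_mul] at this
    exact J.hadd_subset' _ (J.neg_mem' _ hpbJ) _ hpvJ this
  -- Now T² = genIdeal (mulSet T T) ⊆ J
  intro x hx
  have hsub : setPow (T : Set R) 2 ⊆ (J : Set R) := by
    rintro y ⟨p, hp, q, hq, rfl⟩
    exact main p q hp hq
  exact hx (J : Set R) ⟨⟨J, rfl⟩, hsub⟩

end KrasnerHyperring
end

section
/- Let X and Y be commutative Krasner hyperrings with nonzero identity and let N be a weakly prime hyperideal of X. Then M = N × Y is a φ-prime hyperideal of R = X × Y for every function φ : L(R) → L(R) ∪ {∅} with φ_w ≤ φ ≤ φ₁. -/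
universe u

namespace KrasnerHyperring

variable {R : Type u} [KrasnerHyperring R]

/-- The product of two Krasner hyperrings, with componentwise operations. -/
instance prodKH (R₁ R₂ : Type u) [KrasnerHyperring R₁] [KrasnerHyperring R₂] :
    KrasnerHyperring (R₁ × R₂) where
  hadd a b := (hadd a.1 b.1) ×ˢ (hadd a.2 b.2)
  mul a b := (mul a.1 b.1, mul a.2 b.2)
  zero := (zero, zero)
  one := (one, one)
  neg a := (neg a.1, neg a.2)
  hadd_nonempty a b := (hadd_nonempty a.1 b.1).prod (hadd_nonempty a.2 b.2)
  hadd_comm a b := by rw [hadd_comm a.1 b.1, hadd_comm a.2 b.2]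
  hadd_assoc a b c := by
    ext z
    constructor
    · intro hz
      simp only [Set.mem_iUnion] at hz
      obtain ⟨x, hx, hz⟩ := hz
      have H1 : z.1 ∈ ⋃ t ∈ hadd a.1 b.1, hadd t c.1 := Set.mem_biUnion hx.1 hz.1
      have H2 : z.2 ∈ ⋃ t ∈ hadd a.2 b.2, hadd t c.2 := Set.mem_biUnion hx.2 hz.2
      rw [hadd_assoc] at H1 H2
      obtain ⟨y1, hy1, hz1⟩ := Set.mem_iUnion₂.mp H1
      obtain ⟨y2, hy2, hz2⟩ := Set.mem_iUnion₂.mp H2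
      simp only [Set.mem_iUnion]
      exact ⟨(y1, y2), ⟨hy1, hy2⟩, hz1, hz2⟩
    · intro hz
      simp only [Set.mem_iUnion] at hz
      obtain ⟨y, hy, hz⟩ := hz
      have H1 : z.1 ∈ ⋃ t ∈ hadd b.1 c.1, hadd a.1 t := Set.mem_biUnion hy.1 hz.1
      have H2 : z.2 ∈ ⋃ t ∈ hadd b.2 c.2, hadd a.2 t := Set.mem_biUnion hy.2 hz.2
      rw [← hadd_assoc] at H1 H2
      obtain ⟨x1, hx1, hz1⟩ := Set.mem_iUnion₂.mp H1
      obtain ⟨x2, hx2, hz2⟩ := Set.mem_iUnion₂.mp H2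
      simp only [Set.mem_iUnion]
      exact ⟨(x1, x2), ⟨hx1, hx2⟩, hz1, hz2⟩
  hadd_zero a := by simp only []; rw [hadd_zero a.1, hadd_zero a.2, Set.singleton_prod_singleton]
  zero_mem_hadd_neg a := ⟨zero_mem_hadd_neg a.1, zero_mem_hadd_neg a.2⟩
  neg_unique := by
    intro a b h
    have h1 := neg_unique a.1 b.1 h.1
    have h2 := neg_unique a.2 b.2 h.2
    exact Prod.ext h1 h2
  reversible := by
    intro a b c h
    exact ⟨reversible a.1 b.1 c.1 h.1, reversible a.2 b.2 c.2 h.2⟩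
  mul_assoc a b c := by simp [mul_assoc]
  mul_comm a b := by simp [mul_comm a.1 b.1, mul_comm a.2 b.2]
  mul_one a := by simp [mul_one]
  mul_zero a := by simp [mul_zero]
  one_ne_zero := by
    intro h
    exact one_ne_zero (congrArg Prod.fst h)
  distrib a b c := by
    ext x
    constructor
    · rintro ⟨y, hy, rfl⟩
      have h1 : mul a.1 y.1 ∈ (fun t => mul a.1 t) '' hadd b.1 c.1 := ⟨y.1, hy.1, rfl⟩
      have h2 : mul a.2 y.2 ∈ (fun t => mul a.2 t) '' hadd b.2 c.2 := ⟨y.2, hy.2, rfl⟩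
      rw [distrib] at h1 h2
      exact ⟨h1, h2⟩
    · rintro ⟨h1, h2⟩
      rw [← distrib] at h1 h2
      obtain ⟨y1, hy1, e1⟩ := h1
      obtain ⟨y2, hy2, e2⟩ := h2
      exact ⟨(y1, y2), ⟨hy1, hy2⟩, Prod.ext e1 e2⟩

/-- The product hyperideal `N₁ × N₂` of `R₁ × R₂`. -/
def prodIdeal {R₁ R₂ : Type u} [KrasnerHyperring R₁] [KrasnerHyperring R₂]
    (N₁ : Hyperideal R₁) (N₂ : Hyperideal R₂) : Hyperideal (R₁ × R₂) where
  carrier := (N₁ : Set R₁) ×ˢ (N₂ : Set R₂)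
  nonempty' := N₁.nonempty'.prod N₂.nonempty'
  hadd_subset' := by
    rintro a ha b hb x hx
    exact ⟨N₁.hadd_subset' a.1 ha.1 b.1 hb.1 hx.1, N₂.hadd_subset' a.2 ha.2 b.2 hb.2 hx.2⟩
  neg_mem' := by
    rintro a ha
    exact ⟨N₁.neg_mem' a.1 ha.1, N₂.neg_mem' a.2 ha.2⟩
  mul_mem' := by
    rintro r a ha
    exact ⟨N₁.mul_mem' r.1 a.1 ha.1, N₂.mul_mem' r.2 a.2 ha.2⟩

/-- The whole hyperring as a hyperideal. -/
def topIdeal (R : Type u) [KrasnerHyperring R] : Hyperideal R where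
  carrier := Set.univ
  nonempty' := ⟨zero, trivial⟩
  hadd_subset' := fun _ _ _ _ => Set.subset_univ _
  neg_mem' := fun _ _ => trivial
  mul_mem' := fun _ _ _ => trivial
lemma zero_prod_mem_setPow {X Y : Type u} [KrasnerHyperring X] [KrasnerHyperring Y]
    (N : Hyperideal X) (y : Y) :
    ∀ n : ℕ, 1 ≤ n →
      ((zero : X), y) ∈ setPow ((prodIdeal N (topIdeal Y) : Hyperideal (X × Y)) : Set (X × Y)) n
  | 1, _ => ⟨zero_mem N, trivial⟩
  | (n+2), _ => by
    refine ⟨((zero : X), (one : Y)), ⟨zero_mem N, trivial⟩, ((zero : X), y),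
      zero_prod_mem_setPow N y (n+1) (Nat.le_add_left 1 n), ?_⟩
    show ((zero : X), y) = (mul zero zero, mul one y)
    rw [mul_zero, mul_comm, mul_one]

/-- STATEMENT 7: if `N` is a weakly prime hyperideal of `X`, then `N × Y` is a
`φ`-prime hyperideal of `X × Y` for every `φ` with `φ_w ≤ φ ≤ φ₁`. -/
theorem prod_weaklyPrime_phiPrime {X Y : Type u}
    [KrasnerHyperring X] [KrasnerHyperring Y]
    (N : Hyperideal X) (hN : IsWeaklyPrime N)
    (φ : Hyperideal (X × Y) → Set (X × Y)) (hφ : MapsToIdealOrEmpty φ)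
    (hlow : ∀ J : Hyperideal (X × Y), phiW J ⊆ φ J)
    (hhigh : ∀ J : Hyperideal (X × Y), φ J ⊆ (J : Set (X × Y))) :
    IsPhiPrime φ (prodIdeal N (topIdeal Y)) := by
  constructor
  · intro hu
    obtain ⟨x, hx⟩ : ∃ x : X, x ∉ N := by
      by_contra h; push_neg at h
      exact hN.1 (Set.eq_univ_of_forall h)
    have : (x, (zero : Y)) ∈ (prodIdeal N (topIdeal Y) : Set (X × Y)) := by
      rw [hu]; trivial
    exact hx this.1
  · intro a b hab hnphi
    by_cases h0 : mul a.1 b.1 = zero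
    · exfalso
      apply hnphi
      apply hlow
      have hmul : mul a b = ((zero : X), mul a.2 b.2) := by
        show (mul a.1 b.1, mul a.2 b.2) = _
        rw [h0]
      rw [hmul]
      refine Set.mem_iInter₂.mpr fun n hn => ?_
      intro C hC
      exact hC.2 (zero_prod_mem_setPow N (mul a.2 b.2) n hn)
    · rcases hN.2 a.1 b.1 hab.1 h0 with h | h
      · exact Or.inl ⟨h, trivial⟩
      · exact Or.inr ⟨h, trivial⟩

end KrasnerHyperring
end

section
/- Let R be a commutative Krasner hyperring with nonzero identity, φ a reduction function on L(R), and δ an expansion function on L(R) with δ ≤ δ₁, where δ₁(N) = √N. If T is a φ-δ-primary hyperideal of R with φ(T) ≠ ∅ and δ₁(φ(T)) ⊆ δ(T) (i.e. √(φ(T)) ⊆ δ(T)), then δ(T) = δ₁(T) = √T. -/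
universe u

namespace KrasnerHyperring

variable {R : Type u} [KrasnerHyperring R]

/-- if `δ ≤ δ₁`, `T` is `φ`-`δ`-primary, `φ(T) ≠ ∅` and
`√(φ(T)) ⊆ δ(T)`, then `δ(T) = δ₁(T) = √T`. -/
theorem delta_eq_radical_of_phiDeltaPrimary {R : Type u} [KrasnerHyperring R]
    (φ : Hyperideal R → Set R) (δ : Hyperideal R → Hyperideal R)
    (hφ : IsReduction φ) (hδ : IsExpansion δ)
    (hδle : ∀ I : Hyperideal R, (δ I : Set R) ⊆ radical (I : Set R))
    (T : Hyperideal R) (hT : IsPhiDeltaPrimary φ δ T)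
    (hne : φ T ≠ ∅) (hrad : radical (φ T) ⊆ (δ T : Set R)) :
    (δ T : Set R) = radical (T : Set R) := by
  apply Set.Subset.antisymm (hδle T)
  have key : ∀ n : ℕ, 0 < n → ∀ a : R, hpow a n ∈ T → a ∈ δ T := by
    intro n
    induction n with
    | zero => intro h; exact absurd h (lt_irrefl 0)
    | succ n ih =>
      intro _ a ha
      rcases Nat.eq_zero_or_pos n with hn0 | hn
      · subst hn0
        have : hpow a 1 = a := by simp [hpow, mul_one]
        exact (hδ.1 T) (this ▸ ha)
      · by_cases hφT : hpow a (n + 1) ∈ φ T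
        · exact hrad ⟨n + 1, Nat.succ_pos n, hφT⟩
        · have hmul : mul (hpow a n) a ∈ T := by
            rw [mul_comm]; exact ha
          have hmul' : mul (hpow a n) a ∉ φ T := by
            rw [mul_comm]; exact hφT
          rcases hT.2 (hpow a n) a hmul hmul' with h | h
          · exact ih hn a h
          · exact h
  rintro a ⟨n, hn, han⟩
  exact key n hn a han

end KrasnerHyperring
end

section
/- Let μ : R → S be a good homomorphism of commutative Krasner hyperrings with nonzero identity, and let φ be a global reduction function and δ a global expansion function. (i) If M is a φ-δ-primary hyperideal of S, then either μ⁻¹(M) = R or μ⁻¹(M) is a φ-δ-primary hyperideal of R. (ii) If moreover μ is surjective and N is a hyperideal of R containing ker(μ), then N is a φ-δ-primary hyperideal of R if and only if μ(N) is a φ-δ-primary hyperideal of S. -/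
universe u

namespace KrasnerHyperring

variable {R : Type u} [KrasnerHyperring R]

/-- A good homomorphism of Krasner hyperrings. -/
structure GoodHom (R S : Type u) [KrasnerHyperring R] [KrasnerHyperring S] where
  toFun : R → S
  map_hadd : ∀ a b : R, toFun '' hadd a b = hadd (toFun a) (toFun b)
  map_mul : ∀ a b : R, toFun (mul a b) = mul (toFun a) (toFun b)
  map_zero : toFun zero = zero

lemma GoodHom.map_neg {R S : Type u} [KrasnerHyperring R] [KrasnerHyperring S]
    (μ : GoodHom R S) (a : R) : μ.toFun (neg a) = neg (μ.toFun a) := by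
  apply neg_unique
  have h0 : μ.toFun zero ∈ μ.toFun '' hadd a (neg a) := ⟨zero, zero_mem_hadd_neg a, rfl⟩
  rw [μ.map_hadd, μ.map_zero] at h0
  exact h0

/-- The preimage of a hyperideal under a good homomorphism is a hyperideal. -/
def preimIdeal {R S : Type u} [KrasnerHyperring R] [KrasnerHyperring S]
    (μ : GoodHom R S) (M : Hyperideal S) : Hyperideal R where
  carrier := μ.toFun ⁻¹' (M : Set S)
  nonempty' := ⟨zero, by
    show μ.toFun zero ∈ (M : Set S)
    rw [μ.map_zero]; exact zero_mem M⟩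
  hadd_subset' := by
    intro a ha b hb x hx
    have : μ.toFun x ∈ μ.toFun '' hadd a b := ⟨x, hx, rfl⟩
    rw [μ.map_hadd] at this
    exact M.hadd_subset' (μ.toFun a) ha (μ.toFun b) hb this
  neg_mem' := by
    intro a ha
    show μ.toFun (neg a) ∈ (M : Set S)
    rw [μ.map_neg]
    exact M.neg_mem' (μ.toFun a) ha
  mul_mem' := by
    intro r a ha
    show μ.toFun (mul r a) ∈ (M : Set S)
    rw [μ.map_mul]
    exact M.mul_mem' (μ.toFun r) (μ.toFun a) ha

/-- The image of a hyperideal under a surjective good homomorphism is a hyperideal. -/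
def imageIdeal {R S : Type u} [KrasnerHyperring R] [KrasnerHyperring S]
    (μ : GoodHom R S) (hs : Function.Surjective μ.toFun) (N : Hyperideal R) :
    Hyperideal S where
  carrier := μ.toFun '' (N : Set R)
  nonempty' := N.nonempty'.image μ.toFun
  hadd_subset' := by
    rintro a ⟨x, hx, rfl⟩ b ⟨y, hy, rfl⟩ z hz
    rw [← μ.map_hadd] at hz
    obtain ⟨w, hw, rfl⟩ := hz
    exact ⟨w, N.hadd_subset' x hx y hy hw, rfl⟩
  neg_mem' := by
    rintro a ⟨x, hx, rfl⟩
    exact ⟨neg x, N.neg_mem' x hx, μ.map_neg x⟩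
  mul_mem' := by
    rintro r a ⟨x, hx, rfl⟩
    obtain ⟨s, rfl⟩ := hs r
    exact ⟨mul s x, N.mul_mem' s x hx, μ.map_mul s x⟩

lemma neg_neg' {R : Type u} [KrasnerHyperring R] (a : R) : neg (neg a) = a :=
  (neg_unique (neg a) a (by rw [hadd_comm]; exact zero_mem_hadd_neg a)).symm

lemma preim_image_eq {R S : Type u} [KrasnerHyperring R] [KrasnerHyperring S]
    (μ : GoodHom R S) (hs : Function.Surjective μ.toFun) (N : Hyperideal R)
    (hker : {a : R | μ.toFun a = zero} ⊆ (N : Set R)) :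
    preimIdeal μ (imageIdeal μ hs N) = N := by
  apply SetLike.coe_injective
  apply Set.Subset.antisymm
  · rintro a ⟨n, hn, hmu⟩
    have hneg : μ.toFun (neg n) = neg (μ.toFun a) := by rw [μ.map_neg, hmu]
    have h0 : zero ∈ μ.toFun '' hadd a (neg n) := by
      rw [μ.map_hadd, hneg]
      exact zero_mem_hadd_neg (μ.toFun a)
    obtain ⟨x, hx, hx0⟩ := h0
    have hxN : x ∈ (N : Set R) := hker hx0
    have hx' : x ∈ hadd (neg n) a := by rw [hadd_comm]; exact hx
    have ha : a ∈ hadd n x := by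
      have := reversible (neg n) a x hx'
      rwa [neg_neg'] at this
    exact N.hadd_subset' n hn x hxN ha
  · intro a ha
    exact ⟨a, ha, rfl⟩

/-- STATEMENT 18: behaviour of `φ`-`δ`-primary hyperideals under good homomorphisms,
for global reduction and expansion functions. -/
theorem goodHom_phiDeltaPrimary {R S : Type u}
    [KrasnerHyperring R] [KrasnerHyperring S] (μ : GoodHom R S)
    (φR : Hyperideal R → Set R) (φS : Hyperideal S → Set S)
    (δR : Hyperideal R → Hyperideal R) (δS : Hyperideal S → Hyperideal S)
    (hφR : IsReduction φR) (hφS : IsReduction φS)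
    (hδR : IsExpansion δR) (hδS : IsExpansion δS)
    -- `φ` and `δ` are global (with respect to `μ`):
    (hφglob : ∀ M : Hyperideal S, φR (preimIdeal μ M) = μ.toFun ⁻¹' (φS M))
    (hδglob : ∀ M : Hyperideal S,
      (δR (preimIdeal μ M) : Set R) = μ.toFun ⁻¹' (δS M : Set S)) :
    -- (i)
    (∀ M : Hyperideal S, IsPhiDeltaPrimary φS δS M →
      (μ.toFun ⁻¹' (M : Set S) = Set.univ ∨
        IsPhiDeltaPrimary φR δR (preimIdeal μ M))) ∧
    -- (ii)
    (∀ hs : Function.Surjective μ.toFun, ∀ N : Hyperideal R,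
      {a : R | μ.toFun a = zero} ⊆ (N : Set R) →
      (IsPhiDeltaPrimary φR δR N ↔ IsPhiDeltaPrimary φS δS (imageIdeal μ hs N))) := by
  have part1 : ∀ M : Hyperideal S, IsPhiDeltaPrimary φS δS M →
      (μ.toFun ⁻¹' (M : Set S) = Set.univ ∨
        IsPhiDeltaPrimary φR δR (preimIdeal μ M)) := by
    intro M hM
    by_cases h : μ.toFun ⁻¹' (M : Set S) = Set.univ
    · exact Or.inl h
    · right
      refine ⟨h, ?_⟩
      intro a b hab hnab
      have h1 : mul (μ.toFun a) (μ.toFun b) ∈ M := by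
        rw [← μ.map_mul]; exact hab
      have h2 : mul (μ.toFun a) (μ.toFun b) ∉ φS M := by
        rw [← μ.map_mul]
        intro hc
        exact hnab (by rw [hφglob]; exact hc)
      rcases hM.2 _ _ h1 h2 with h3 | h3
      · exact Or.inl h3
      · right
        show b ∈ (δR (preimIdeal μ M) : Set R)
        rw [hδglob]
        exact h3
  refine ⟨part1, ?_⟩
  intro hs N hker
  have hNeq : preimIdeal μ (imageIdeal μ hs N) = N := preim_image_eq μ hs N hker
  constructor
  · intro hN
    constructor
    · intro hu
      apply hN.1
      have h2 : (preimIdeal μ (imageIdeal μ hs N) : Set R) = Set.univ := by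
        show μ.toFun ⁻¹' (imageIdeal μ hs N : Set S) = Set.univ
        rw [hu]; simp
      rw [hNeq] at h2
      exact h2
    · intro a b hab hnab
      obtain ⟨x, rfl⟩ := hs a
      obtain ⟨y, rfl⟩ := hs b
      have hxy : mul x y ∈ N := by
        have h2 : mul x y ∈ (preimIdeal μ (imageIdeal μ hs N) : Set R) := by
          show μ.toFun (mul x y) ∈ (imageIdeal μ hs N : Set S)
          rw [μ.map_mul]; exact hab
        rwa [hNeq] at h2
      have hnxy : mul x y ∉ φR N := by
        intro hc
        apply hnab
        rw [← hNeq, hφglob] at hc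
        rw [← μ.map_mul]
        exact hc
      rcases hN.2 x y hxy hnxy with h3 | h3
      · exact Or.inl ⟨x, h3, rfl⟩
      · right
        have h4 : y ∈ (δR (preimIdeal μ (imageIdeal μ hs N)) : Set R) := by
          rw [hNeq]; exact h3
        rw [hδglob] at h4
        exact h4
  · intro hM
    rcases part1 _ hM with h | h
    · exfalso
      apply hM.1
      apply Set.eq_univ_of_forall
      intro s
      obtain ⟨r, rfl⟩ := hs s
      have h2 : r ∈ μ.toFun ⁻¹' (imageIdeal μ hs N : Set S) := h ▸ Set.mem_univ r
      exact h2
    · rwa [hNeq] at h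

end KrasnerHyperring
end
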